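/- arXiv:2304.02342 — 2 statements merged into one kernel-verified Lean document; each statement's English description precedes it below -/
import Mathlib

section
/- Let $\phi_{2,1},\phi_{2,2},\omega_{2,2}$ be nonzero reals with $2|\phi_{2,1}\phi_{2,2}|<1$, set $\Lambda = 2|\phi_{2,1}\phi_{2,2}|$, and for $\lambda$ with $\Lambda<|\lambda|\le 1$ and $x\in\mathbb{Z}$ define $\psi_\lambda(x) = \frac{1}{2\pi}\int_{-\pi}^{\pi}\frac{2i\,\omega_{2,2}\phi_{2,1}\sin k}{2\phi_{2,1}\phi_{2,2}\cos k - \lambda}\,e^{ikx}\,dk$. Then $\psi_{\pm\Lambda}(x) := \lim_{\lambda\to\pm\Lambda^{\pm}}\psi_\lambda(x) = (\pm\operatorname{sgn}(\phi_{2,1}\phi_{2,2}))^{x}\,\operatorname{sgn}(x)\,\frac{\omega_{2,2}}{\phi_{2,2}}$ for $x\neq 0$, and $\psi_{\pm\Lambda}(0)=0$. -/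
namespace Stmt13Helper
open Real intervalIntegral


noncomputable def DD (r k : ℝ) : ℝ := 1 - 2*r*Real.cos k + r^2

lemma DD_pos {r : ℝ} (hr : |r| < 1) (k : ℝ) : 0 < DD r k := by
  obtain ⟨h1, h2⟩ := abs_lt.mp hr
  have c1 := Real.neg_one_le_cos k
  have c2 := Real.cos_le_one k
  unfold DD
  rcases le_or_gt 0 r with h | h
  · nlinarith [sq_nonneg (1-r), mul_nonneg h (by linarith : (0:ℝ) ≤ 1 - Real.cos k)]
  · nlinarith [sq_nonneg (1+r), mul_nonneg (by linarith : (0:ℝ) ≤ -r) (by linarith : (0:ℝ) ≤ 1 + Real.cos k)]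

lemma DD_cont (r : ℝ) : Continuous (DD r) := by unfold DD; continuity

lemma one_sub_rcos_pos {r : ℝ} (hr : |r| < 1) (k : ℝ) : 0 < 1 - r * Real.cos k := by
  have h1 : r * Real.cos k ≤ |r| * |Real.cos k| := by
    calc r * Real.cos k ≤ |r * Real.cos k| := le_abs_self _
    _ = |r| * |Real.cos k| := abs_mul _ _
  have h2 : |r| * |Real.cos k| ≤ |r| * 1 :=
    mul_le_mul_of_nonneg_left (Real.abs_cos_le_one k) (abs_nonneg r)
  linarith

lemma integral_one_div_DD {r : ℝ} (hr : |r| < 1) :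
    ∫ k in (-π)..π, 1 / DD r k = 2*π/(1-r^2) := by
  have hr2 : (0:ℝ) < 1 - r^2 := by
    obtain ⟨h1, h2⟩ := abs_lt.mp hr; nlinarith
  have key : ∀ k ∈ Set.uIcc (-π) π, HasDerivAt
      (fun k => (k + 2*Real.arctan (r*Real.sin k/(1 - r*Real.cos k)))/(1-r^2))
      (1 / DD r k) k := by
    intro k _
    have hden := (one_sub_rcos_pos hr k).ne'
    have hD := (DD_pos hr k).ne'
    have hpy := Real.sin_sq_add_cos_sq k
    have hu : HasDerivAt (fun k => r*Real.sin k/(1 - r*Real.cos k))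
        ((r*Real.cos k*(1 - r*Real.cos k) - r*Real.sin k*(r*Real.sin k))/(1 - r*Real.cos k)^2) k := by
      have h1 : HasDerivAt (fun k => r*Real.sin k) (r*Real.cos k) k :=
        (Real.hasDerivAt_sin k).const_mul r
      have h2 : HasDerivAt (fun k => 1 - r*Real.cos k) (r*Real.sin k) k := by
        have := ((Real.hasDerivAt_cos k).const_mul r).const_sub 1
        simpa using this
      exact h1.div h2 hden
    have h3 := ((hasDerivAt_id k).add (hu.arctan.const_mul 2)).div_const (1-r^2)
    convert h3 using 1
    case e'_4 => rfl
    case e'_5 => rfl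
    case e'_8 => rfl
    have e1 : 1 + (r*Real.sin k/(1-r*Real.cos k))^2 = DD r k / (1-r*Real.cos k)^2 := by
      unfold DD; field_simp; linear_combination (r^2) * hpy
    have e2 : r*Real.cos k*(1-r*Real.cos k) - r*Real.sin k*(r*Real.sin k)
        = r*Real.cos k - r^2 := by linear_combination (-(r^2))*hpy
    rw [e1, e2]
    unfold DD at *
    field_simp
    ring
  have hcont : ContinuousOn (fun k => 1 / DD r k) (Set.uIcc (-π) π) :=
    (continuous_const.div (DD_cont r) (fun k => (DD_pos hr k).ne')).continuousOn
  rw [intervalIntegral.integral_eq_sub_of_hasDerivAt key (hcont.intervalIntegrable)]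
  simp [Real.sin_pi, Real.cos_pi]
  ring

noncomputable def ff (r k : ℝ) : ℝ := (-2*r*Real.sin k) / DD r k

lemma ff_cont {r : ℝ} (hr : |r| < 1) : Continuous (ff r) :=
  (by continuity : Continuous fun k => -2*r*Real.sin k).div (DD_cont r)
    (fun k => (DD_pos hr k).ne')

lemma hasDerivAt_DD (r k : ℝ) : HasDerivAt (DD r) (2*r*Real.sin k) k := by
  unfold DD
  have := (((Real.hasDerivAt_cos k).const_mul (2*r)).const_sub 1).add_const (r^2)
  simpa using this

lemma integral_ff {r : ℝ} (hr : |r| < 1) : ∫ k in (-π)..π, ff r k = 0 := by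
  have key : ∀ k ∈ Set.uIcc (-π) π, HasDerivAt (fun k => -Real.log (DD r k)) (ff r k) k := by
    intro k _
    have h := ((hasDerivAt_DD r k).log (DD_pos hr k).ne').neg
    unfold ff
    convert h using 1
    case e'_4 => rfl
    case e'_5 => rfl
    case e'_8 => rfl
    ring
  rw [intervalIntegral.integral_eq_sub_of_hasDerivAt key
    ((ff_cont hr).continuousOn.intervalIntegrable)]
  unfold DD
  simp [Real.cos_neg]

lemma cont_expI (m : ℤ) : Continuous fun k : ℝ => Complex.exp (Complex.I*k*m) := by
  fun_prop

lemma intExp (m : ℤ) : (∫ k in (-π)..π, Complex.exp (Complex.I*k*m))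
    = if m = 0 then 2*π else 0 := by
  rcases eq_or_ne m 0 with h | h
  · subst h; simp; ring
  · rw [if_neg h]
    have hc : (Complex.I * m) ≠ 0 := by
      simp [Complex.I_ne_zero, Complex.ext_iff]
      exact_mod_cast h
    have : ∀ k : ℝ, Complex.I*(k:ℂ)*m = (Complex.I*m)*k := fun k => by ring
    simp_rw [this]
    rw [integral_exp_mul_complex hc]
    have : Complex.exp (Complex.I*m*π) = Complex.exp (Complex.I*m*(-π:ℝ)) := by
      rw [Complex.exp_eq_exp_iff_exists_int]
      exact ⟨m, by push_cast; ring⟩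
    rw [this]
    simp

lemma sinExp (m : ℤ) : (∫ k in (-π)..π, (Real.sin k : ℂ) * Complex.exp (Complex.I*k*m))
    = if m = 1 then π*Complex.I else if m = -1 then -π*Complex.I else 0 := by
  have pt : ∀ k : ℝ, (Real.sin k : ℂ) * Complex.exp (Complex.I*k*m)
      = Complex.I/2 * Complex.exp (Complex.I*k*((m-1 : ℤ) : ℂ))
        - Complex.I/2 * Complex.exp (Complex.I*k*((m+1 : ℤ) : ℂ)) := by
    intro k
    rw [Complex.ofReal_sin, Complex.sin]
    push_cast
    rw [show Complex.I*(k:ℂ)*((m:ℂ)-1) = (-k*Complex.I) + Complex.I*k*m from by ring,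
      show Complex.I*(k:ℂ)*((m:ℂ)+1) = ((k:ℂ)*Complex.I) + Complex.I*k*m from by ring,
      Complex.exp_add, Complex.exp_add]
    ring
  simp_rw [pt]
  rw [intervalIntegral.integral_sub (f := fun k : ℝ => Complex.I/2 * Complex.exp (Complex.I*k*((m-1 : ℤ) : ℂ))) (g := fun k : ℝ => Complex.I/2 * Complex.exp (Complex.I*k*((m+1 : ℤ) : ℂ))) ((continuous_const.mul (cont_expI (m-1))).intervalIntegrable _ _)
    ((continuous_const.mul (cont_expI (m+1))).intervalIntegrable _ _),
    intervalIntegral.integral_const_mul, intervalIntegral.integral_const_mul]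
  have e1 := intExp (m-1)
  have e2 := intExp (m+1)
  push_cast at e1 e2 ⊢
  rw [e1, e2]
  rcases eq_or_ne m 1 with h | h
  · subst h; norm_num; ring
  · rcases eq_or_ne m (-1) with h' | h'
    · subst h'; norm_num; ring
    · rw [if_neg (by omega), if_neg (by omega), if_neg h, if_neg h']
      ring
noncomputable def JJ (r : ℝ) (x : ℤ) : ℂ :=
  ∫ k in (-π)..π, (ff r k : ℂ) * Complex.exp (Complex.I*k*x)



lemma cont_Jint {r : ℝ} (hr : |r| < 1) (m : ℤ) :
    Continuous fun k : ℝ => (ff r k : ℂ) * Complex.exp (Complex.I*k*m) :=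
  (Complex.continuous_ofReal.comp (ff_cont hr)).mul (cont_expI m)

lemma JJ_zero {r : ℝ} (hr : |r| < 1) : JJ r 0 = 0 := by
  unfold JJ
  simp only [Int.cast_zero, mul_zero, Complex.exp_zero, mul_one]
  rw [intervalIntegral.integral_ofReal, integral_ff hr]
  simp

lemma JJ_one {r : ℝ} (hr : |r| < 1) (hr0 : r ≠ 0) : JJ r 1 = -2*π*Complex.I*r := by
  have hpy : ∀ k, Real.sin k ^2 + Real.cos k^2 = 1 := Real.sin_sq_add_cos_sq
  have hr2 : (0:ℝ) < 1 - r^2 := by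
    obtain ⟨h1, h2⟩ := abs_lt.mp hr; nlinarith
  have pt : ∀ k : ℝ, (ff r k : ℂ) * Complex.exp (Complex.I*k*(1:ℤ))
      = ((ff r k * Real.cos k : ℝ) : ℂ) + ((ff r k * Real.sin k : ℝ) : ℂ) * Complex.I := by
    intro k
    rw [show Complex.I*(k:ℂ)*((1:ℤ):ℂ) = (k:ℂ)*Complex.I from by push_cast; ring,
      Complex.exp_mul_I]
    rw [← Complex.ofReal_cos, ← Complex.ofReal_sin]
    push_cast
    ring
  have hc1 : Continuous fun k : ℝ => ((ff r k * Real.cos k : ℝ) : ℂ) :=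
    Complex.continuous_ofReal.comp ((ff_cont hr).mul Real.continuous_cos)
  have hc2 : Continuous fun k : ℝ => ((ff r k * Real.sin k : ℝ) : ℂ) * Complex.I :=
    (Complex.continuous_ofReal.comp ((ff_cont hr).mul Real.continuous_sin)).mul continuous_const
  unfold JJ
  simp_rw [pt]
  rw [intervalIntegral.integral_add (hc1.intervalIntegrable _ _) (hc2.intervalIntegrable _ _),
    intervalIntegral.integral_mul_const, intervalIntegral.integral_ofReal,
    intervalIntegral.integral_ofReal]
  have hcosint : (∫ k in (-π)..π, ff r k * Real.cos k) = 0 := by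
    have pt2 : ∀ k : ℝ, ff r k * Real.cos k = ((1+r^2)/(2*r)) * ff r k + Real.sin k := by
      intro k
      have hD := (DD_pos hr k).ne'
      unfold ff DD at *
      field_simp
      ring
    simp_rw [pt2]
    rw [intervalIntegral.integral_add (f := fun k => ((1+r^2)/(2*r)) * ff r k) ((continuous_const.mul (ff_cont hr)).intervalIntegrable _ _)
        (Real.continuous_sin.intervalIntegrable _ _),
      intervalIntegral.integral_const_mul, integral_ff hr, integral_sin]
    simp
  have hsinint : (∫ k in (-π)..π, ff r k * Real.sin k) = -2*π*r := by
    have pt2 : ∀ k : ℝ, ff r k * Real.sin k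
        = ((1-r^2)^2/(2*r)) * (1/DD r k) + (-((1+r^2)/r) + (1/(2*r)) * DD r k) := by
      intro k
      have hD := (DD_pos hr k).ne'
      have := hpy k
      have hs2 : Real.sin k^2 = 1 - Real.cos k^2 := by linarith [this]
      unfold ff DD at *
      field_simp
      ring_nf
      simp only [hs2]
      ring
    simp_rw [pt2]
    have hDint : (∫ k in (-π)..π, (-((1+r^2)/r) + (1/(2*r)) * DD r k)) = -π*(1+r^2)/r := by
      have : ∀ k : ℝ, (-((1+r^2)/r) + (1/(2*r)) * DD r k)
          = (-((1+r^2)/r) + (1/(2*r))*(1+r^2)) + (-(1/(2*r))*(2*r)) * Real.cos k := by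
        intro k; unfold DD; field_simp; ring
      simp_rw [this]
      rw [intervalIntegral.integral_add (g := fun k => (-(1/(2*r))*(2*r)) * Real.cos k) (intervalIntegrable_const)
          ((continuous_const.mul Real.continuous_cos).intervalIntegrable _ _),
        intervalIntegral.integral_const_mul, integral_cos]
      simp
      field_simp
      ring
    have hcd : Continuous fun k => ((1-r^2)^2/(2*r)) * (1/DD r k) :=
      continuous_const.mul (continuous_const.div (DD_cont r) fun k => (DD_pos hr k).ne')
    have hce : Continuous fun k => (-((1+r^2)/r) + (1/(2*r)) * DD r k) :=
      continuous_const.add (continuous_const.mul (DD_cont r))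
    rw [intervalIntegral.integral_add (hcd.intervalIntegrable _ _) (hce.intervalIntegrable _ _),
      intervalIntegral.integral_const_mul, integral_one_div_DD hr, hDint]
    field_simp
    ring
  rw [hcosint, hsinint]
  push_cast
  ring


lemma JJ_rec {r : ℝ} (hr : |r| < 1) (hr0 : r ≠ 0) (m : ℤ) :
    JJ r (m+1) + JJ r (m-1) = ((1+r^2)/r : ℝ) * JJ r m
      + 2 * (if m = 1 then π*Complex.I else if m = -1 then -π*Complex.I else 0) := by
  have pt : ∀ k : ℝ, (ff r k : ℂ) * Complex.exp (Complex.I*k*((m+1 : ℤ):ℂ))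
      + (ff r k : ℂ) * Complex.exp (Complex.I*k*((m-1 : ℤ):ℂ))
      = ((1+r^2)/r : ℝ) * ((ff r k : ℂ) * Complex.exp (Complex.I*k*(m:ℂ)))
        + 2 * ((Real.sin k : ℂ) * Complex.exp (Complex.I*k*(m:ℂ))) := by
    intro k
    have hD := (DD_pos hr k).ne'
    have e1 : Complex.exp (Complex.I*k*((m+1 : ℤ):ℂ))
        = Complex.exp (Complex.I*k*(m:ℂ)) * Complex.exp ((k:ℂ)*Complex.I) := by
      rw [← Complex.exp_add]; congr 1; push_cast; ring
    have e2 : Complex.exp (Complex.I*k*((m-1 : ℤ):ℂ))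
        = Complex.exp (Complex.I*k*(m:ℂ)) * Complex.exp (-(k:ℂ)*Complex.I) := by
      rw [← Complex.exp_add]; congr 1; push_cast; ring
    rw [e1, e2, Complex.exp_mul_I, Complex.exp_mul_I]
    have hreal : (ff r k : ℂ) * (2 * (Real.cos k : ℂ))
        = ((1+r^2)/r : ℝ) * (ff r k : ℂ) + 2 * (Real.sin k : ℂ) := by
      have : ff r k * (2 * Real.cos k) = ((1+r^2)/r) * ff r k + 2 * Real.sin k := by
        unfold ff DD at *
        field_simp
        ring
      calc (ff r k : ℂ) * (2 * (Real.cos k : ℂ))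
          = ((ff r k * (2 * Real.cos k) : ℝ) : ℂ) := by push_cast; ring
        _ = ((((1+r^2)/r) * ff r k + 2 * Real.sin k : ℝ) : ℂ) := by rw [this]
        _ = _ := by push_cast; ring
    have hcs : Complex.cos (-(k:ℂ)) = Complex.cos k := Complex.cos_neg _
    have hsn : Complex.sin (-(k:ℂ)) = -Complex.sin k := Complex.sin_neg _
    rw [hcs, hsn, ← Complex.ofReal_cos, ← Complex.ofReal_sin] at *
    linear_combination Complex.exp (Complex.I*k*(m:ℂ)) * hreal
  unfold JJ
  rw [← intervalIntegral.integral_add ((cont_Jint hr (m+1)).intervalIntegrable _ _)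
      ((cont_Jint hr (m-1)).intervalIntegrable _ _)]
  simp_rw [pt]
  have hc1 : Continuous fun k : ℝ => (((1+r^2)/r : ℝ) : ℂ) * ((ff r k : ℂ) * Complex.exp (Complex.I*k*(m:ℂ))) :=
    continuous_const.mul (cont_Jint hr m)
  have hc2 : Continuous fun k : ℝ => (2:ℂ) * ((Real.sin k : ℂ) * Complex.exp (Complex.I*k*(m:ℂ))) :=
    continuous_const.mul ((Complex.continuous_ofReal.comp Real.continuous_sin).mul (cont_expI m))
  rw [intervalIntegral.integral_add (hc1.intervalIntegrable _ _) (hc2.intervalIntegrable _ _),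
    intervalIntegral.integral_const_mul, intervalIntegral.integral_const_mul, sinExp]

lemma JJ_pos {r : ℝ} (hr : |r| < 1) (hr0 : r ≠ 0) (n : ℕ) :
    JJ r ((n:ℤ)+1) = -2*π*Complex.I*r^(n+1) := by
  induction n using Nat.twoStepInduction with
  | zero => simpa using JJ_one hr hr0
  | one =>
    have h := JJ_rec hr hr0 1
    norm_num at h
    rw [JJ_zero hr, JJ_one hr hr0] at h
    push_cast at h ⊢
    have hrc : (r:ℂ) ≠ 0 := by exact_mod_cast hr0
    have e : ((1:ℂ)+(r:ℂ)^2)/r * (-2*(π:ℂ)*Complex.I*(r:ℂ)) = -2*π*Complex.I*(1+(r:ℂ)^2) := by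
      field_simp
    rw [e] at h
    norm_num at h ⊢
    linear_combination h
  | more n ih2 ih1 =>
    have h := JJ_rec hr hr0 ((n:ℤ)+2)
    have hif : ((n:ℤ)+2 ≠ 1) := by omega
    have hif2 : ((n:ℤ)+2 ≠ -1) := by omega
    rw [if_neg hif, if_neg hif2] at h
    have e1 : (n:ℤ)+2+1 = ((n+2:ℕ):ℤ)+1 := by push_cast; ring
    have e2 : (n:ℤ)+2-1 = ((n:ℤ))+1 := by ring
    have e3 : (n:ℤ)+2 = ((n+1:ℕ):ℤ)+1 := by push_cast; ring
    rw [e1, e2, e3, ih1, ih2] at h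
    push_cast at h ⊢
    have hrc : (r:ℂ) ≠ 0 := by exact_mod_cast hr0
    have e : ((1:ℂ)+(r:ℂ)^2)/r * (-2*π*Complex.I*(r:ℂ)^(n+1+1)) = -2*π*Complex.I*((1+(r:ℂ)^2) * (r:ℂ)^(n+1)) := by
      field_simp
      ring
    rw [e] at h
    linear_combination h


lemma ff_odd (r k : ℝ) : ff r (-k) = - ff r k := by
  unfold ff DD; rw [Real.sin_neg, Real.cos_neg]; ring

lemma JJ_neg (r : ℝ) (x : ℤ) : JJ r (-x) = - JJ r x := by
  unfold JJ
  have h1 : (∫ k in (-π)..π, (ff r k : ℂ) * Complex.exp (Complex.I*k*((-x:ℤ):ℂ)))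
      = ∫ k in (-π)..π, (ff r (-k) : ℂ) * Complex.exp (Complex.I*((-k:ℝ):ℂ)*((-x:ℤ):ℂ)) := by
    rw [intervalIntegral.integral_comp_neg
      (fun k : ℝ => (ff r k : ℂ) * Complex.exp (Complex.I*(k:ℂ)*((-x:ℤ):ℂ)))]
    norm_num
  rw [h1]
  have h2 : ∀ k : ℝ, (ff r (-k) : ℂ) * Complex.exp (Complex.I*((-k:ℝ):ℂ)*((-x:ℤ):ℂ))
      = -((ff r k : ℂ) * Complex.exp (Complex.I*k*(x:ℂ))) := by
    intro k
    rw [ff_odd]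
    push_cast
    ring_nf
  simp_rw [h2]
  rw [intervalIntegral.integral_neg]

lemma JJ_val {r : ℝ} (hr : |r| < 1) (hr0 : r ≠ 0) (x : ℤ) :
    JJ r x = -2*π*Complex.I * ((Int.sign x : ℝ) : ℂ) * (r:ℂ)^x.natAbs := by
  rcases lt_trichotomy x 0 with h | h | h
  · obtain ⟨n, rfl⟩ : ∃ n : ℕ, x = -((n:ℤ)+1) := ⟨(-x-1).toNat, by omega⟩
    rw [JJ_neg r ((n:ℤ)+1), JJ_pos hr hr0 n]
    have : (-((n:ℤ)+1)).natAbs = n+1 := by omega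
    rw [this]
    have hs : Int.sign (-((n:ℤ)+1)) = -1 := Int.sign_eq_neg_one_iff_neg.mpr (by omega)
    rw [hs]
    push_cast
    ring
  · subst h; rw [JJ_zero hr]; simp
  · obtain ⟨n, rfl⟩ : ∃ n : ℕ, x = (n:ℤ)+1 := ⟨(x-1).toNat, by omega⟩
    rw [JJ_pos hr hr0 n]
    have : ((n:ℤ)+1).natAbs = n+1 := by omega
    rw [this]
    have hs : Int.sign ((n:ℤ)+1) = 1 := Int.sign_eq_one_iff_pos.mpr (by omega)
    rw [hs]
    push_cast
    ring

lemma psi_closed (φ21 φ22 ω22 r : ℝ) (hφ21 : φ21 ≠ 0) (hφ22 : φ22 ≠ 0)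
    (hr : |r| < 1) (hr0 : r ≠ 0) (x : ℤ) :
    (1 / (2 * (π : ℂ))) *
      (∫ k in (-π)..π, (2 * Complex.I * (ω22 : ℂ) * (φ21 : ℂ) * (Real.sin k : ℂ))
        / ((2 * φ21 * φ22 * Real.cos k - (2*φ21*φ22*((1+r^2)/(2*r))) : ℝ) : ℂ)
        * Complex.exp (Complex.I * (k : ℂ) * (x : ℂ)))
    = (((ω22/φ22) * (Int.sign x : ℝ) * r^x.natAbs : ℝ) : ℂ) := by
  have hpt : ∀ k : ℝ, (2 * Complex.I * (ω22 : ℂ) * (φ21 : ℂ) * (Real.sin k : ℂ))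
        / ((2 * φ21 * φ22 * Real.cos k - (2*φ21*φ22*((1+r^2)/(2*r))) : ℝ) : ℂ)
        * Complex.exp (Complex.I * (k : ℂ) * (x : ℂ))
      = (Complex.I * ω22 / φ22) * ((ff r k : ℂ) * Complex.exp (Complex.I * (k : ℂ) * (x : ℂ))) := by
    intro k
    have hD : (DD r k : ℝ) ≠ 0 := (DD_pos hr k).ne'
    have hDc : ((DD r k : ℝ) : ℂ) ≠ 0 := by exact_mod_cast hD
    have hrc : ((r:ℝ):ℂ) ≠ 0 := by exact_mod_cast hr0
    have hφ21c : ((φ21:ℝ):ℂ) ≠ 0 := by exact_mod_cast hφ21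
    have hφ22c : ((φ22:ℝ):ℂ) ≠ 0 := by exact_mod_cast hφ22
    have hden : (2*φ21*φ22*Real.cos k - (2*φ21*φ22*((1+r^2)/(2*r))) : ℝ)
        = -(φ21*φ22/r) * DD r k := by unfold DD; field_simp; ring
    rw [hden]
    unfold ff
    push_cast
    field_simp
  simp_rw [hpt]
  rw [intervalIntegral.integral_const_mul]
  have : (∫ k in (-π)..π, (ff r k : ℂ) * Complex.exp (Complex.I * (k : ℂ) * (x : ℂ))) = JJ r x := rfl
  rw [this, JJ_val hr hr0]
  have hπ : ((π:ℝ):ℂ) ≠ 0 := by exact_mod_cast Real.pi_ne_zero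
  have hφ22c : ((φ22:ℝ):ℂ) ≠ 0 := by exact_mod_cast hφ22
  push_cast
  field_simp
  linear_combination (-((ω22:ℂ)*((Int.sign x : ℤ):ℂ)*(r:ℂ)^x.natAbs)) * Complex.I_sq

lemma neg_one_zpow_natAbs (x : ℤ) : (-1:ℝ)^x = (-1:ℝ)^x.natAbs := by
  rcases Int.natAbs_eq x with h | h
  · conv_lhs => rw [h]
    rw [zpow_natCast]
  · conv_lhs => rw [h]
    rw [zpow_neg, zpow_natCast, ← inv_pow, inv_neg, inv_one]


end Stmt13Helper

open Stmt13Helper in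
open Real in
theorem stmt_13 (φ21 φ22 ω22 : ℝ)
    (hφ21 : φ21 ≠ 0) (hφ22 : φ22 ≠ 0) (hω22 : ω22 ≠ 0)
    (Λ : ℝ) (hΛ : Λ = 2 * |φ21 * φ22|) (hΛ1 : Λ < 1)
    (ψ : ℝ → ℤ → ℂ)
    (hψ : ∀ (lam : ℝ) (x : ℤ), ψ lam x = (1 / (2 * (π : ℂ))) *
      ∫ k in (-π)..π, (2 * Complex.I * (ω22 : ℂ) * (φ21 : ℂ) * (Real.sin k : ℂ))
        / ((2 * φ21 * φ22 * Real.cos k - lam : ℝ) : ℂ)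
        * Complex.exp (Complex.I * (k : ℂ) * (x : ℂ))) :
    (∀ x : ℤ, x ≠ 0 →
      Filter.Tendsto (fun lam => ψ lam x) (nhdsWithin Λ (Set.Ioi Λ))
        (nhds ((((Real.sign (φ21 * φ22)) ^ x * (Int.sign x : ℝ) * (ω22 / φ22) : ℝ)) : ℂ))
      ∧ Filter.Tendsto (fun lam => ψ lam x) (nhdsWithin (-Λ) (Set.Iio (-Λ)))
        (nhds ((((-Real.sign (φ21 * φ22)) ^ x * (Int.sign x : ℝ) * (ω22 / φ22) : ℝ)) : ℂ)))
    ∧ (Filter.Tendsto (fun lam => ψ lam 0) (nhdsWithin Λ (Set.Ioi Λ)) (nhds 0)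
      ∧ Filter.Tendsto (fun lam => ψ lam 0) (nhdsWithin (-Λ) (Set.Iio (-Λ))) (nhds 0)) := by
  have ha : 2*φ21*φ22 ≠ 0 := by
    simp [hφ21, hφ22]
  set a : ℝ := 2*φ21*φ22 with ha_def
  have hΛa : Λ = |a| := by
    rw [hΛ, ha_def, abs_mul (2*φ21) φ22, abs_mul 2 φ21, abs_two, abs_mul]
    ring
  have hΛpos : 0 < Λ := by rw [hΛa]; exact abs_pos.mpr ha
  have hΛ2 : Λ^2 = a^2 := by rw [hΛa, sq_abs]
  have key : ∀ (lam r : ℝ), |r| < 1 → r ≠ 0 → lam = a * ((1+r^2)/(2*r)) →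
      ∀ x : ℤ, ψ lam x = (((ω22/φ22) * (Int.sign x : ℝ) * r^x.natAbs : ℝ) : ℂ) := by
    intro lam r h1 h2 h3 x
    rw [hψ, show lam = 2*φ21*φ22*((1+r^2)/(2*r)) from by rw [h3]]
    exact psi_closed φ21 φ22 ω22 r hφ21 hφ22 h1 h2 x
  -- properties of the r-functions on each branch
  have branch : ∀ (lam u : ℝ), u ≠ 0 → |u| < Λ → 2*u*lam = a^2 + u^2 →
      |u/a| < 1 ∧ u/a ≠ 0 ∧ lam = a * ((1+(u/a)^2)/(2*(u/a))) := by
    intro lam u hu0 huΛ hid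
    have h1 : |u/a| < 1 := by
      rw [abs_div]
      rw [div_lt_one (abs_pos.mpr ha)]
      rw [hΛa] at huΛ; exact huΛ
    refine ⟨h1, div_ne_zero hu0 ha, ?_⟩
    have : a * ((1+(u/a)^2)/(2*(u/a))) = (a^2 + u^2)/(2*u) := by
      field_simp
    rw [this, eq_div_iff (by simpa using hu0 : 2*u ≠ 0)]
    linear_combination hid
  have plus : ∀ lam ∈ Set.Ioi Λ,
      |(lam - Real.sqrt (lam^2-Λ^2))/a| < 1 ∧ (lam - Real.sqrt (lam^2-Λ^2))/a ≠ 0 ∧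
      lam = a * ((1+((lam - Real.sqrt (lam^2-Λ^2))/a)^2)/(2*((lam - Real.sqrt (lam^2-Λ^2))/a))) := by
    intro lam hlam
    simp only [Set.mem_Ioi] at hlam
    set s := Real.sqrt (lam^2-Λ^2) with hs_def
    have hs0 : 0 ≤ s := Real.sqrt_nonneg _
    have hs2 : s^2 = lam^2 - Λ^2 := Real.sq_sqrt (by nlinarith)
    have hslam : s < lam := by nlinarith
    have hsgt : lam - Λ < s := by nlinarith
    apply branch
    · nlinarith
    · rw [abs_of_pos (by nlinarith)]; nlinarith
    · linear_combination -hs2 + hΛ2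
  have minus : ∀ lam ∈ Set.Iio (-Λ),
      |(lam + Real.sqrt (lam^2-Λ^2))/a| < 1 ∧ (lam + Real.sqrt (lam^2-Λ^2))/a ≠ 0 ∧
      lam = a * ((1+((lam + Real.sqrt (lam^2-Λ^2))/a)^2)/(2*((lam + Real.sqrt (lam^2-Λ^2))/a))) := by
    intro lam hlam
    simp only [Set.mem_Iio] at hlam
    set s := Real.sqrt (lam^2-Λ^2) with hs_def
    have hs0 : 0 ≤ s := Real.sqrt_nonneg _
    have hs2 : s^2 = lam^2 - Λ^2 := Real.sq_sqrt (by nlinarith)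
    have hslam : s < -lam := by nlinarith
    have hsgt : -lam - Λ < s := by nlinarith
    apply branch
    · nlinarith
    · rw [abs_of_neg (by nlinarith)]; nlinarith
    · linear_combination -hs2 + hΛ2
  -- continuity of r-functions
  have contsq : Continuous fun lam : ℝ => Real.sqrt (lam^2 - Λ^2) :=
    Real.continuous_sqrt.comp ((continuous_pow 2).sub continuous_const)
  have contp : Continuous fun lam : ℝ => (lam - Real.sqrt (lam^2-Λ^2))/a :=
    (continuous_id.sub contsq).div_const a
  have contm : Continuous fun lam : ℝ => (lam + Real.sqrt (lam^2-Λ^2))/a :=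
    (continuous_id.add contsq).div_const a
  have hrp_tendsto : Filter.Tendsto (fun lam : ℝ => (lam - Real.sqrt (lam^2-Λ^2))/a)
      (nhdsWithin Λ (Set.Ioi Λ)) (nhds (Λ/a)) := by
    have := (contp.tendsto Λ).mono_left (nhdsWithin_le_nhds (s := Set.Ioi Λ))
    simpa using this
  have hrm_tendsto : Filter.Tendsto (fun lam : ℝ => (lam + Real.sqrt (lam^2-Λ^2))/a)
      (nhdsWithin (-Λ) (Set.Iio (-Λ))) (nhds (-Λ/a)) := by
    have := (contm.tendsto (-Λ)).mono_left (nhdsWithin_le_nhds (s := Set.Iio (-Λ)))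
    simpa using this
  -- generic limits
  have glimp : ∀ x : ℤ, Filter.Tendsto (fun lam => ψ lam x) (nhdsWithin Λ (Set.Ioi Λ))
      (nhds ((((ω22/φ22) * (Int.sign x : ℝ) * (Λ/a)^x.natAbs : ℝ)) : ℂ)) := by
    intro x
    have hcont : Continuous fun t : ℝ => (((ω22/φ22) * (Int.sign x : ℝ) * t^x.natAbs : ℝ) : ℂ) :=
      Complex.continuous_ofReal.comp (continuous_const.mul (continuous_pow _))
    have h1 := (hcont.tendsto (Λ/a)).comp hrp_tendsto
    apply h1.congr'
    filter_upwards [self_mem_nhdsWithin] with lam hlam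
    obtain ⟨hb1, hb2, hb3⟩ := plus lam hlam
    exact (key lam _ hb1 hb2 hb3 x).symm
  have glimm : ∀ x : ℤ, Filter.Tendsto (fun lam => ψ lam x) (nhdsWithin (-Λ) (Set.Iio (-Λ)))
      (nhds ((((ω22/φ22) * (Int.sign x : ℝ) * (-Λ/a)^x.natAbs : ℝ)) : ℂ)) := by
    intro x
    have hcont : Continuous fun t : ℝ => (((ω22/φ22) * (Int.sign x : ℝ) * t^x.natAbs : ℝ) : ℂ) :=
      Complex.continuous_ofReal.comp (continuous_const.mul (continuous_pow _))
    have h1 := (hcont.tendsto (-Λ/a)).comp hrm_tendsto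
    apply h1.congr'
    filter_upwards [self_mem_nhdsWithin] with lam hlam
    obtain ⟨hb1, hb2, hb3⟩ := minus lam hlam
    exact (key lam _ hb1 hb2 hb3 x).symm
  -- the sign value
  have hσ : Λ/a = Real.sign (φ21*φ22) := by
    rcases lt_or_gt_of_ne (mul_ne_zero hφ21 hφ22) with h | h
    · rw [Real.sign_of_neg h, hΛa, abs_of_neg (by rw [ha_def]; nlinarith), ha_def]
      field_simp
    · rw [Real.sign_of_pos h, hΛa, abs_of_pos (by rw [ha_def]; nlinarith), ha_def]
      field_simp
  have hσpm : Real.sign (φ21*φ22) = 1 ∨ Real.sign (φ21*φ22) = -1 := by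
    rcases lt_or_gt_of_ne (mul_ne_zero hφ21 hφ22) with h | h
    · right; exact Real.sign_of_neg h
    · left; exact Real.sign_of_pos h
  have hzpow : ∀ σ : ℝ, (σ = 1 ∨ σ = -1) → ∀ y : ℤ, σ^y = σ^y.natAbs := by
    rintro σ (rfl | rfl) y
    · simp
    · exact neg_one_zpow_natAbs y
  constructor
  · intro x hx
    constructor
    · have := glimp x
      convert this using 2
      rw [hσ, hzpow _ hσpm x]
      ring
    · have := glimm x
      convert this using 2
      have hneg : -Λ/a = -Real.sign (φ21*φ22) := by rw [← hσ]; ring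
      rw [hneg, hzpow _ (by rcases hσpm with h | h <;> simp [h]) x]
      ring
  · constructor
    · have := glimp 0
      simpa using this
    · have := glimm 0
      simpa using this
end

section
/- Let $S$ and $C$ be unitary self-adjoint operators on a Hilbert space $\mathcal{H}$ with $C = 2d^*d - 1$ where $d:\mathcal{H}\to\mathcal{K}$ satisfies $dd^* = I_{\mathcal{K}}$, and set $U = SC$, $T = dSd^*$. Suppose $\lambda\in[-1,1]$, $h\in\mathcal{K}$, and $(T-\lambda)h = 0$ with $d^*h \neq 0$. Then for $\mu = \lambda + i\sqrt{1-\lambda^2}$ (so $\operatorname{Re}\mu = \lambda$, $|\mu|=1$), the vector $\Psi = (1-\mu S)d^*h$ satisfies $U\Psi = \mu\Psi$. -/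
open ContinuousLinearMap in
theorem stmt_15 {H K : Type*}
    [NormedAddCommGroup H] [InnerProductSpace ℂ H] [CompleteSpace H]
    [NormedAddCommGroup K] [InnerProductSpace ℂ K] [CompleteSpace K]
    (S C : H →L[ℂ] H) (d : H →L[ℂ] K)
    (hSa : adjoint S = S) (hS2 : S ∘L S = ContinuousLinearMap.id ℂ H)
    (hCa : adjoint C = C) (hC2 : C ∘L C = ContinuousLinearMap.id ℂ H)
    (hC : C = 2 • (adjoint d ∘L d) - ContinuousLinearMap.id ℂ H)
    (hdd : d ∘L adjoint d = ContinuousLinearMap.id ℂ K)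
    (U : H →L[ℂ] H) (hU : U = S ∘L C)
    (T : K →L[ℂ] K) (hT : T = d ∘L S ∘L adjoint d)
    (lam : ℝ) (hlam : lam ∈ Set.Icc (-1 : ℝ) 1)
    (h : K) (hh : T h = (lam : ℂ) • h) (hdh : adjoint d h ≠ 0)
    (μ : ℂ) (hμ : μ = (lam : ℂ) + Complex.I * (Real.sqrt (1 - lam ^ 2) : ℂ))
    (Ψ : H) (hΨ : Ψ = adjoint d h - μ • S (adjoint d h)) :
    U Ψ = μ • Ψ := by
  set a := adjoint d h with ha
  -- d a = h
  have hda : d a = h := by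
    have := congrArg (fun f => f h) hdd
    simpa using this
  -- C a = a
  have hCa' : C a = a := by
    rw [hC]
    simp [hda, two_smul, ← ha]
  -- d (S a) = lam • h
  have hdSa : d (S a) = (lam : ℂ) • h := by
    have := congrArg (fun f => f h) hT
    simpa using hh ▸ this.symm
  -- C (S a) = (2*lam) • a - S a
  have hCSa : C (S a) = ((2 * lam : ℂ)) • a - S a := by
    rw [hC]
    simp only [ContinuousLinearMap.sub_apply, ContinuousLinearMap.smul_apply,
      ContinuousLinearMap.coe_comp', Function.comp_apply, ContinuousLinearMap.id_apply]
    rw [hdSa]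
    rw [map_smul]
    rw [two_smul]
    module
  have hSS : ∀ x : H, S (S x) = x := fun x => by
    have := congrArg (fun f => f x) hS2
    simpa using this
  -- quadratic identity
  have hs : ((Real.sqrt (1 - lam ^ 2) : ℝ) : ℂ) ^ 2 = 1 - (lam : ℂ) ^ 2 := by
    have h1 : (0:ℝ) ≤ 1 - lam ^ 2 := by
      obtain ⟨h1, h2⟩ := hlam
      nlinarith
    have := Real.sq_sqrt h1
    push_cast [this]
    norm_cast
  have hquad : μ ^ 2 - 2 * (lam : ℂ) * μ + 1 = 0 := by
    subst hμ
    have hI : Complex.I ^ 2 = -1 := Complex.I_sq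
    linear_combination (((Real.sqrt (1 - lam ^ 2) : ℝ) : ℂ)) ^ 2 * hI - hs
  -- main computation
  have hUa : U a = S a := by rw [hU]; simp [hCa']
  have hUSa : U (S a) = (2 * lam : ℂ) • S a - a := by
    rw [hU]
    simp only [ContinuousLinearMap.coe_comp', Function.comp_apply]
    rw [hCSa, map_sub, map_smul, hSS]
  rw [hΨ, map_sub, map_smul, hUa, hUSa]
  match_scalars <;> first
    | linear_combination hquad
    | linear_combination -hquad
    | ring
end
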